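/- arXiv:1101.5621 — 3 statements merged into one kernel-verified Lean document; each statement's English description precedes it below -/
import Mathlib

section
/- Every infinite connected matroid contains an infinite circuit or an infinite cocircuit. -/
open Set Matroid

variable {α : Type*}

/-- A circuit of a (possibly infinite) matroid: a minimal dependent set. -/
def Circuit (M : Matroid α) (C : Set α) : Prop :=
  M.Dep C ∧ ∀ C' ⊂ C, ¬ M.Dep C'

/-- A cocircuit: a circuit of the dual matroid. -/
def Cocircuit (M : Matroid α) (D : Set α) : Prop :=
  Circuit M✶ D

/-- Deletion of the set `D` from the matroid `M`. -/
def delete (M : Matroid α) (D : Set α) : Matroid α :=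
  M ↾ (M.E \ D)

/-- Contraction of the set `C` in the matroid `M`, i.e. `M/C = (M✶ − C)✶`. -/
def contract (M : Matroid α) (C : Set α) : Matroid α :=
  (_root_.delete M✶ C)✶

/-- `del M I J` : the minimum cardinality of a finite `F ⊆ I ∪ J` with
`(I ∪ J) \ F` independent in `M`, or `∞` if no such finite set exists. -/
noncomputable def del (M : Matroid α) (I J : Set α) : ℕ∞ :=
  sInf {n : ℕ∞ | ∃ F : Set α, F.Finite ∧ F ⊆ I ∪ J ∧ M.Indep ((I ∪ J) \ F) ∧ n = F.encard}

/-- The connectivity function `κ_M(X)`, defined via `del` on bases of `M|X`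
and `M|(E \ X)` (its value does not depend on the choice of bases). -/
noncomputable def conn (M : Matroid α) (X : Set α) : ℕ∞ :=
  ⨅ B ∈ {B | (M ↾ X).IsBase B}, ⨅ B' ∈ {B' | (M ↾ (M.E \ X)).IsBase B'}, del M B B'

/-- `κ_M(X,Y) = min {κ_M(U) : X ⊆ U ⊆ E(M) \ Y}`. -/
noncomputable def connBtw (M : Matroid α) (X Y : Set α) : ℕ∞ :=
  ⨅ U ∈ {U | X ⊆ U ∧ U ⊆ M.E \ Y}, conn M U

/-- `x ~ y` iff `x = y` or some circuit contains both `x` and `y`. -/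
def ConnRel (M : Matroid α) (x y : α) : Prop :=
  x = y ∨ ∃ C, Circuit M C ∧ x ∈ C ∧ y ∈ C

/-! ### Auxiliary lemmas -/

section Aux

variable {M : Matroid α} {C C' D F H I J Z : Set α} {e x a y : α}

lemma Circuit.subset_ground' (hC : Circuit M C) : C ⊆ M.E :=
  hC.1.subset_ground

lemma Circuit.indep_of_ssubset' (hC : Circuit M C) (h : C' ⊂ C) : M.Indep C' :=
  indep_of_not_dep (hC.2 C' h) (h.subset.trans hC.1.subset_ground)

lemma Circuit.diff_singleton_indep' (hC : Circuit M C) (he : e ∈ C) : M.Indep (C \ {e}) :=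
  hC.indep_of_ssubset' (Set.sdiff_singleton_ssubset.2 he)

lemma Circuit.mem_closure_diff_singleton' (hC : Circuit M C) (he : e ∈ C) :
    e ∈ M.closure (C \ {e}) := by
  have hI := hC.diff_singleton_indep' he
  by_contra h
  have hind : M.Indep (insert e (C \ {e})) := by
    rw [hI.insert_indep_iff_of_notMem (by simp)]
    exact ⟨hC.subset_ground' he, h⟩
  rw [Set.insert_diff_singleton, Set.insert_eq_of_mem he] at hind
  exact hC.1.not_indep hind

/-- Fundamental circuit: if `e ∈ cl I \ I` with `I` independent, there is a circuit
through `e` inside `insert e I`. -/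
lemma exists_circuit_of_mem_closure (hI : M.Indep I) (he : e ∈ M.closure I) (heI : e ∉ I) :
    ∃ C, Circuit M C ∧ e ∈ C ∧ C ⊆ insert e I := by
  classical
  set Js : Set (Set α) := {J | J ⊆ I ∧ e ∈ M.closure J} with hJs
  have hne : Js.Nonempty := ⟨I, Subset.rfl, he⟩
  set J₀ : Set α := ⋂₀ Js with hJ₀def
  have hJ₀I : J₀ ⊆ I := (sInter_subset_of_mem hne.some_mem).trans hne.some_mem.1
  have hJ₀ : M.Indep J₀ := hI.subset hJ₀I
  have heJ₀ : e ∉ J₀ := fun h => heI (hJ₀I h)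
  have heE : e ∈ M.E := M.closure_subset_ground I he
  have hecl : e ∈ M.closure J₀ := by
    rw [hJ₀def, hI.closure_sInter_eq_biInter_closure_of_forall_subset hne (fun J hJ => hJ.1)]
    exact mem_iInter₂.2 fun J hJ => hJ.2
  have hmin : ∀ y ∈ J₀, e ∉ M.closure (J₀ \ {y}) := by
    intro y hy hcl
    have hmem : (J₀ \ {y}) ∈ Js := ⟨(diff_subset).trans hJ₀I, hcl⟩
    exact (sInter_subset_of_mem hmem hy).2 rfl
  refine ⟨insert e J₀, ⟨?_, ?_⟩, mem_insert _ _, insert_subset_insert hJ₀I⟩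
  · rw [hJ₀.insert_dep_iff]
    exact ⟨hecl, heJ₀⟩
  · intro C' hC'
    have hindC' : M.Indep C' := by
      by_cases heC' : e ∈ C'
      · have hJ' : C' \ {e} ⊆ J₀ := by
          intro z hz
          rcases hC'.subset hz.1 with rfl | h
          · exact absurd rfl hz.2
          · exact h
        have hssub : C' \ {e} ≠ J₀ := by
          intro hEq
          refine hC'.not_subset ?_
          intro z hz
          rcases eq_or_ne z e with rfl | hzne
          · exact heC'
          · have : z ∈ C' \ {e} := hEq ▸ (show z ∈ J₀ from by
              rcases hz with rfl | h
              · exact absurd rfl hzne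
              · exact h)
            exact this.1
        obtain ⟨y, hyJ₀, hyJ'⟩ := exists_of_ssubset (ssubset_of_subset_of_ne hJ' hssub)
        have hiy : M.Indep (insert e (J₀ \ {y})) := by
          rw [(hJ₀.subset diff_subset).insert_indep_iff_of_notMem (fun h => heJ₀ h.1)]
          exact ⟨heE, hmin y hyJ₀⟩
        refine hiy.subset ?_
        intro z hz
        rcases eq_or_ne z e with rfl | hzne
        · exact mem_insert _ _
        · refine mem_insert_of_mem _ ⟨hJ' ⟨hz, hzne⟩, ?_⟩
          simp only [mem_singleton_iff]
          rintro rfl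
          exact hyJ' ⟨hz, hzne⟩
      · exact hJ₀.subset (fun z hz => by
          rcases hC'.subset hz with rfl | h
          · exact absurd hz heC'
          · exact h)
    exact hindC'.not_dep
/-- A finite subset of the union of a nonempty chain is contained in some member. -/
lemma finite_subset_chain_mem {c : Set (Set α)} (hc : IsChain (· ⊆ ·) c) (hne : c.Nonempty)
    {s : Set α} (hs : s.Finite) (hsub : s ⊆ ⋃₀ c) : ∃ F ∈ c, s ⊆ F := by
  classical
  revert hsub
  refine Set.Finite.induction_on s hs (fun _ => ⟨hne.some, hne.some_mem, empty_subset _⟩) ?_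
  rintro a s ha hsfin IH hsub
  obtain ⟨F₁, hF₁c, hsF₁⟩ := IH fun z hz => hsub (mem_insert_of_mem _ hz)
  obtain ⟨F₂, hF₂c, haF₂⟩ := hsub (mem_insert a s)
  rcases eq_or_ne F₁ F₂ with rfl | hne'
  · exact ⟨F₁, hF₁c, insert_subset haF₂ hsF₁⟩
  rcases hc hF₁c hF₂c hne' with h | h
  · exact ⟨F₂, hF₂c, insert_subset haF₂ (hsF₁.trans h)⟩
  · exact ⟨F₁, hF₁c, insert_subset (h haF₂) hsF₁⟩

/-- Key construction: given all circuits and cocircuits finite, `x ∉ cl Z`, there is a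
closed set `H ⊇ Z` avoiding `x` with finite complement, such that every circuit through `x`
meets `M.E \ H` in a second element. -/
lemma key_cocircuit (hCfin : ∀ C, Circuit M C → C.Finite) (hDfin : ∀ D, Cocircuit M D → D.Finite)
    (hx : x ∈ M.E) (hZE : Z ⊆ M.E) (hZ : x ∉ M.closure Z) :
    ∃ H, M.closure H = H ∧ Z ⊆ H ∧ x ∈ M.E \ H ∧ (M.E \ H).Finite ∧
      (∀ C, Circuit M C → x ∈ C → ∃ d ∈ C ∩ (M.E \ H), d ≠ x) := by
  classical
  set S : Set (Set α) := {F | M.closure F = F ∧ M.closure Z ⊆ F ∧ x ∉ F} with hS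
  have hZS : M.closure Z ∈ S := ⟨M.closure_closure Z, Subset.rfl, hZ⟩
  -- Zorn
  have hzorn : ∀ c ⊆ S, IsChain (· ⊆ ·) c → c.Nonempty → ∃ ub ∈ S, ∀ s ∈ c, s ⊆ ub := by
    intro c hcS hchain hcne
    refine ⟨⋃₀ c, ⟨?_, ?_, ?_⟩, fun s hs => subset_sUnion_of_mem hs⟩
    · -- the union is closed
      have hUE : ⋃₀ c ⊆ M.E := by
        intro z hz
        obtain ⟨F, hFc, hzF⟩ := hz
        have : z ∈ M.closure F := by rw [(hcS hFc).1]; exact hzF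
        exact M.closure_subset_ground F this
      refine subset_antisymm ?_ (M.subset_closure _ hUE)
      intro y hy
      by_contra hyU
      obtain ⟨I, hI⟩ := M.exists_isBasis (⋃₀ c) hUE
      have hycl : y ∈ M.closure I := by rwa [hI.closure_eq_closure]
      have hyI : y ∉ I := fun h => hyU (hI.subset h)
      obtain ⟨C, hC, hyC, hCsub⟩ := exists_circuit_of_mem_closure hI.indep hycl hyI
      have hCy : C \ {y} ⊆ ⋃₀ c := by
        intro z hz
        rcases hCsub hz.1 with rfl | h
        · exact absurd rfl hz.2
        · exact hI.subset h
      obtain ⟨F, hFc, hCF⟩ := finite_subset_chain_mem hchain hcne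
        ((hCfin C hC).subset diff_subset) hCy
      have : y ∈ M.closure F :=
        M.closure_subset_closure hCF (hC.mem_closure_diff_singleton' hyC)
      rw [(hcS hFc).1] at this
      exact hyU ⟨F, hFc, this⟩
    · exact (hcS hcne.some_mem).2.1.trans (subset_sUnion_of_mem hcne.some_mem)
    · rintro ⟨F, hFc, hxF⟩
      exact (hcS hFc).2.2 hxF
  obtain ⟨H, hZH, hHS, hHmax⟩ := zorn_subset_nonempty S hzorn _ hZS
  obtain ⟨hHcl, hZHsub, hxH⟩ := hHS
  have hHE : H ⊆ M.E := hHcl ▸ M.closure_subset_ground H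
  -- maximality: any closed proper superset of `H` avoiding `x` is impossible
  have hmax' : ∀ F, M.closure F = F → H ⊆ F → x ∉ F → F = H := by
    intro F hFcl hHF hxF
    exact le_antisymm (hHmax ⟨hFcl, hZHsub.trans hHF, hxF⟩ hHF) hHF
  -- Step 1 : cl (insert x H) = M.E
  have hstep1 : M.closure (insert x H) = M.E := by
    refine subset_antisymm (M.closure_subset_ground _) ?_
    intro y hyE
    by_contra hyc
    have hyH : y ∉ H := fun h => hyc (M.subset_closure _
      (insert_subset hx hHE) (mem_insert_of_mem _ h))
    have hxy : x ∈ M.closure (insert y H) := by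
      by_contra hxcy
      have : M.closure (insert y H) = H :=
        hmax' _ (M.closure_closure _) ((subset_insert _ _).trans
          (M.subset_closure _ (insert_subset hyE hHE))) hxcy
      exact hyH (this ▸ M.subset_closure _ (insert_subset hyE hHE) (mem_insert _ _))
    have hxH' : x ∉ M.closure H := by rwa [hHcl]
    exact hyc (closure_exchange ⟨hxy, hxH'⟩).1
  -- Step 2 : cl (insert a H) = M.E for any a ∈ M.E \ H
  have hstep2 : ∀ a ∈ M.E \ H, M.closure (insert a H) = M.E := by
    rintro a ⟨haE, haH⟩
    have hxa : x ∈ M.closure (insert a H) := by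
      by_contra hxca
      have : M.closure (insert a H) = H :=
        hmax' _ (M.closure_closure _) ((subset_insert _ _).trans
          (M.subset_closure _ (insert_subset haE hHE))) hxca
      exact haH (this ▸ M.subset_closure _ (insert_subset haE hHE) (mem_insert _ _))
    refine subset_antisymm (M.closure_subset_ground _) ?_
    have h1 : insert x H ⊆ M.closure (insert a H) :=
      insert_subset hxa ((subset_insert _ _).trans (M.subset_closure _ (insert_subset haE hHE)))
    calc M.E = M.closure (insert x H) := hstep1.symm
      _ ⊆ M.closure (M.closure (insert a H)) := M.closure_subset_closure h1
      _ = M.closure (insert a H) := M.closure_closure _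
  -- `M.E \ H` is a cocircuit
  have hcocirc : Cocircuit M (M.E \ H) := by
    constructor
    · -- M✶.Dep (M.E \ H)
      rw [dep_iff]
      refine ⟨?_, by rw [dual_ground]; exact diff_subset⟩
      rw [dual_indep_iff_exists']
      rintro ⟨-, B, hB, hdisj⟩
      have hBH : B ⊆ H := by
        intro b hb
        by_contra h
        exact (disjoint_right.1 hdisj hb) ⟨hB.subset_ground hb, h⟩
      have : M.E ⊆ H := by
        calc M.E = M.closure B := hB.closure_eq.symm
          _ ⊆ M.closure H := M.closure_subset_closure hBH
          _ = H := hHcl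
      exact hxH (this hx)
    · -- minimality
      intro D' hD'
      obtain ⟨a, haD, haD'⟩ := exists_of_ssubset hD'
      obtain ⟨I, hI⟩ := M.exists_isBasis H hHE
      have hclI : M.closure I = H := by rw [hI.closure_eq_closure, hHcl]
      have haI : M.Indep (insert a I) := by
        rw [hI.indep.insert_indep_iff_of_notMem (fun h => haD.2 (hI.subset h))]
        exact ⟨haD.1, fun h => haD.2 (hclI ▸ h)⟩
      have hbase : M.IsBase (insert a I) := by
        refine haI.isBase_of_ground_subset_closure ?_
        have : M.closure (insert a I) = M.closure (insert a H) := by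
          rw [← hclI, closure_insert_closure_eq_closure_insert]
        rw [this, hstep2 a haD]
      intro hdep
      rw [dep_iff, dual_indep_iff_exists'] at hdep
      refine hdep.1 ⟨hD'.subset.trans diff_subset, insert a I, hbase, ?_⟩
      rw [disjoint_right]
      rintro z (rfl | hzI)
      · exact haD'
      · exact fun hzD' => (hD'.subset hzD').2 (hI.subset hzI)
  refine ⟨H, hHcl, (M.subset_closure Z hZE).trans hZHsub, ⟨hx, hxH⟩,
    hDfin _ hcocirc, ?_⟩
  intro C hC hxC
  have hne1 : C ∩ (M.E \ H) ≠ {x} := by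
    intro hEq
    have hCH : C \ {x} ⊆ H := by
      intro z hz
      have hzE : z ∈ M.E := hC.subset_ground' hz.1
      by_contra hzH
      have : z ∈ C ∩ (M.E \ H) := ⟨hz.1, hzE, hzH⟩
      rw [hEq] at this
      exact hz.2 this
    have : x ∈ M.closure H := M.closure_subset_closure hCH
      (hC.mem_closure_diff_singleton' hxC)
    rw [hHcl] at this
    exact hxH this
  by_contra hcon
  push_neg at hcon
  refine hne1 (subset_antisymm (fun z hz => hcon z hz) ?_)
  rintro z rfl
  exact ⟨hxC, hx, hxH⟩

end Aux

theorem stmt7 (M : Matroid α) (hinf : M.E.Infinite)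
    (hconn : ∀ x ∈ M.E, ∀ y ∈ M.E, ConnRel M x y) :
    (∃ C, Circuit M C ∧ C.Infinite) ∨ (∃ D, Cocircuit M D ∧ D.Infinite) := by
  classical
  by_contra hcon
  push_neg at hcon
  obtain ⟨h1, h2⟩ := hcon
  have hCfin : ∀ C, Circuit M C → C.Finite := fun C hC => h1 C hC
  have hDfin : ∀ D, Cocircuit M D → D.Finite := fun D hD => h2 D hD
  obtain ⟨x₀, hx₀E⟩ := hinf.nonempty
  set Cs : Set (Set α) := {C | Circuit M C ∧ x₀ ∈ C} with hCs
  have hCsinf : Cs.Infinite := by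
    by_contra hfin
    rw [Set.not_infinite] at hfin
    have hsub : M.E ⊆ insert x₀ (⋃₀ Cs) := by
      intro y hy
      rcases hconn x₀ hx₀E y hy with rfl | ⟨C, hC, hxC, hyC⟩
      · exact mem_insert _ _
      · exact mem_insert_of_mem _ ⟨C, ⟨hC, hxC⟩, hyC⟩
    exact hinf (((hfin.sUnion fun C hC => hCfin C hC.1).insert x₀).subset hsub)
  -- growth step : a finite set `Y ∋ x₀` contained in infinitely many circuits can be grown
  have grow : ∀ Y : Set α, Y.Finite → x₀ ∈ Y → {C | C ∈ Cs ∧ Y ⊆ C}.Infinite →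
      ∃ d, d ∉ Y ∧ {C | C ∈ Cs ∧ insert d Y ⊆ C}.Infinite := by
    intro Y hYfin hx₀Y hDinf
    obtain ⟨C₁, hC₁mem⟩ := (hDinf.diff (Set.finite_singleton Y)).nonempty
    have hYC₁ : Y ⊂ C₁ :=
      ssubset_of_subset_of_ne hC₁mem.1.2 (fun h => hC₁mem.2 (by simp [h.symm]))
    have hYind : M.Indep Y := hC₁mem.1.1.1.indep_of_ssubset' hYC₁
    have hYE : Y ⊆ M.E := hYind.subset_ground
    have hx₀cl : x₀ ∉ M.closure (Y \ {x₀}) := hYind.notMem_closure_sdiff_of_mem hx₀Y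
    obtain ⟨H, hHcl, hZH, hxmem, hfinD, hkey⟩ :=
      key_cocircuit hCfin hDfin hx₀E (diff_subset.trans hYE) hx₀cl
    have hcover : {C | C ∈ Cs ∧ Y ⊆ C} ⊆
        ⋃ d ∈ (M.E \ H) \ {x₀}, {C | (C ∈ Cs ∧ Y ⊆ C) ∧ d ∈ C} := by
      intro C hC
      obtain ⟨d, hd, hdx⟩ := hkey C hC.1.1 hC.1.2
      exact mem_biUnion ⟨hd.2, hdx⟩ ⟨hC, hd.1⟩
    have hex : ∃ d ∈ (M.E \ H) \ {x₀}, {C | (C ∈ Cs ∧ Y ⊆ C) ∧ d ∈ C}.Infinite := by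
      by_contra hall
      push_neg at hall
      exact hDinf (((hfinD.diff (t := {x₀})).biUnion fun d hd => hall d hd).subset hcover)
    obtain ⟨d, hd, hdinf⟩ := hex
    refine ⟨d, fun hdY => hd.1.2 (hZH ⟨hdY, hd.2⟩), hdinf.mono ?_⟩
    rintro C ⟨⟨hCmem, hYC⟩, hdC⟩
    exact ⟨hCmem, insert_subset hdC hYC⟩
  by_cases hbdd : ∃ K : ℕ, ∀ C ∈ Cs, C.ncard ≤ K
  · -- bounded case
    obtain ⟨K, hK⟩ := hbdd
    have claim : ∀ k : ℕ, ∃ Y : Set α, Y.Finite ∧ x₀ ∈ Y ∧ Y.ncard = k + 1 ∧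
        {C | C ∈ Cs ∧ Y ⊆ C}.Infinite := by
      intro k
      induction k with
      | zero =>
        refine ⟨{x₀}, finite_singleton _, mem_singleton _, ncard_singleton _, ?_⟩
        exact hCsinf.mono fun C hC => ⟨hC, singleton_subset_iff.2 hC.2⟩
      | succ k IH =>
        obtain ⟨Y, hYfin, hx₀Y, hcard, hinf'⟩ := IH
        obtain ⟨d, hdY, hdinf⟩ := grow Y hYfin hx₀Y hinf'
        exact ⟨insert d Y, hYfin.insert d, mem_insert_of_mem _ hx₀Y,
          by rw [Set.ncard_insert_of_notMem hdY hYfin, hcard], hdinf⟩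
    obtain ⟨Y, hYfin, hx₀Y, hcard, hinf'⟩ := claim K
    obtain ⟨C, hC⟩ := hinf'.nonempty
    have hle : Y.ncard ≤ C.ncard := Set.ncard_le_ncard hC.2 (hCfin C hC.1.1)
    rw [hcard] at hle
    exact absurd (hle.trans (hK C hC.1)) (by omega)
  · -- unbounded case : ultrafilter limit of large circuits through x₀
    push_neg at hbdd
    choose Cn hCnmem hCnlt using hbdd
    set U := Filter.hyperfilter ℕ with hU
    set Cinf : Set α := {e | {n | e ∈ Cn n} ∈ U} with hCinfdef
    have hLim : ∀ F : Set α, F.Finite → {n | Cn n ∩ F = Cinf ∩ F} ∈ U := by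
      intro F hF
      refine Set.Finite.induction_on F hF (Filter.univ_mem' fun n => by simp) ?_
      intro a s ha hsfin IH
      have hA : {n | a ∈ Cn n ↔ a ∈ Cinf} ∈ U := by
        by_cases haC : a ∈ Cinf
        · have h' : {n | a ∈ Cn n} ∈ U := haC
          filter_upwards [h'] with n hn
          exact iff_of_true hn haC
        · have h' : {n | a ∈ Cn n}ᶜ ∈ U := Ultrafilter.compl_mem_iff_notMem.2 haC
          filter_upwards [h'] with n hn
          exact iff_of_false hn haC
      filter_upwards [IH, hA] with n hs hiff
      ext z
      rcases eq_or_ne z a with rfl | hz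
      · exact ⟨fun h => ⟨hiff.1 h.1, mem_insert _ _⟩, fun h => ⟨hiff.2 h.1, mem_insert _ _⟩⟩
      · simp only [mem_inter_iff, mem_insert_iff]
        constructor
        · rintro ⟨hzc, h⟩
          have hzs : z ∈ s := h.resolve_left hz
          have : z ∈ Cinf ∩ s := hs ▸ (show z ∈ Cn n ∩ s from ⟨hzc, hzs⟩)
          exact ⟨this.1, Or.inr hzs⟩
        · rintro ⟨hzc, h⟩
          have hzs : z ∈ s := h.resolve_left hz
          have : z ∈ Cn n ∩ s := hs.symm ▸ (show z ∈ Cinf ∩ s from ⟨hzc, hzs⟩)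
          exact ⟨this.1, Or.inr hzs⟩
    have hx₀inf : x₀ ∈ Cinf := by
      have huniv : {n | x₀ ∈ Cn n} = Set.univ := eq_univ_of_forall fun n => (hCnmem n).2
      show {n | x₀ ∈ Cn n} ∈ U
      rw [huniv]
      exact Filter.univ_mem
    have hCinfE : Cinf ⊆ M.E := by
      intro e he
      obtain ⟨n, hn⟩ := Filter.nonempty_of_mem (he : {n | e ∈ Cn n} ∈ (U : Filter ℕ))
      exact (hCnmem n).1.subset_ground' hn
    have hfinind : ∀ F, F ⊆ Cinf → F.Finite → M.Indep F := by
      intro F hFsub hFfin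
      have hmem1 : {n | Cn n ∩ F = Cinf ∩ F} ∈ U := hLim F hFfin
      have hmem2 : {n | F.ncard < n} ∈ U := by
        refine Filter.le_def.mp Filter.hyperfilter_le_cofinite _ ?_
        rw [Filter.mem_cofinite]
        exact (Set.finite_le_nat F.ncard).subset fun n hn => by simpa using hn
      obtain ⟨n, hn1, hn2⟩ := Filter.nonempty_of_mem (Filter.inter_mem hmem1 hmem2)
      have hFC : F ⊆ Cn n := by
        intro z hz
        have hzi : z ∈ Cinf ∩ F := ⟨hFsub hz, hz⟩
        have : z ∈ Cn n ∩ F := by rw [hn1]; exact hzi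
        exact this.1
      have hss : F ⊂ Cn n := by
        refine ssubset_of_subset_of_ne hFC fun hEq => ?_
        have hlt := hCnlt n
        rw [← hEq] at hlt
        have h2 : F.ncard < n := hn2
        omega
      exact (hCnmem n).1.indep_of_ssubset' hss
    have hnocl : x₀ ∉ M.closure (Cinf \ {x₀}) := by
      intro hmem
      obtain ⟨I, hI⟩ := M.exists_isBasis (Cinf \ {x₀}) (diff_subset.trans hCinfE)
      have hx₀I : x₀ ∉ I := fun h => (hI.subset h).2 rfl
      have hx₀cl : x₀ ∈ M.closure I := by rwa [hI.closure_eq_closure]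
      obtain ⟨C, hC, hx₀C, hCsub⟩ := exists_circuit_of_mem_closure hI.indep hx₀cl hx₀I
      have hCC : C ⊆ Cinf := hCsub.trans
        (insert_subset hx₀inf ((hI.subset).trans diff_subset))
      exact hC.1.not_indep (hfinind C hCC (hCfin C hC))
    obtain ⟨H, hHcl, hZH, hxmem, hfinD, hkey⟩ :=
      key_cocircuit hCfin hDfin hx₀E (diff_subset.trans hCinfE) hnocl
    have hCD : Cinf ∩ (M.E \ H) = {x₀} := by
      apply subset_antisymm
      · rintro z ⟨hz, hzD⟩
        by_contra hzx
        exact hzD.2 (hZH ⟨hz, by simpa using hzx⟩)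
      · intro z hz
        rw [mem_singleton_iff] at hz
        subst hz
        exact ⟨hx₀inf, hxmem⟩
    obtain ⟨n, hn⟩ := Filter.nonempty_of_mem (hLim (M.E \ H) hfinD)
    obtain ⟨d, hd, hdx⟩ := hkey (Cn n) (hCnmem n).1 (hCnmem n).2
    rw [show (Cn n ∩ (M.E \ H)) = Cinf ∩ (M.E \ H) from hn, hCD] at hd
    exact hdx hd
end

section
/- The connectivity function κ of a (possibly infinite) matroid is submodular: κ(X) + κ(Y) ≥ κ(X ∪ Y) + κ(X ∩ Y) for all subsets X, Y of the ground set (with values in ℕ ∪ {∞}). -/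
open Set Matroid

variable {α : Type*}

section Aux

variable {M : Matroid α} {B B' B₁ B₂ D D₁ D₂ I J S T U V W X Y Z P F : Set α}


/-- A spanning set between an independent set and itself contains a base containing the set. -/
lemma exists_base_between (hI : M.Indep I) (hIS : I ⊆ S) (hS : M.Spanning S) :
    ∃ D, M.IsBase D ∧ I ⊆ D ∧ D ⊆ S := by
  obtain ⟨B₀, hB₀, hB₀S⟩ := hS.exists_isBase_subset
  obtain ⟨D, hD, hID, hDsub⟩ := hI.exists_isBase_subset_union_isBase hB₀
  exact ⟨D, hD, hID, hDsub.trans (union_subset hIS hB₀S)⟩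

/-- Two bases inside a common set have equicardinal complements. -/
lemma base_diff_encard_eq (hD₁ : M.IsBase D₁) (hD₂ : M.IsBase D₂) (h₁ : D₁ ⊆ T) (h₂ : D₂ ⊆ T) :
    (T \ D₁).encard = (T \ D₂).encard := by
  have e₁ : T \ D₁ = (T \ (D₁ ∪ D₂)) ∪ (D₂ \ D₁) := by
    ext x
    constructor
    · rintro ⟨hxT, hx1⟩
      by_cases hx2 : x ∈ D₂
      · exact Or.inr ⟨hx2, hx1⟩
      · exact Or.inl ⟨hxT, fun h => h.elim hx1 hx2⟩
    · rintro (⟨hxT, hx⟩ | ⟨hx2, hx1⟩)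
      · exact ⟨hxT, fun h => hx (Or.inl h)⟩
      · exact ⟨h₂ hx2, hx1⟩
  have e₂ : T \ D₂ = (T \ (D₁ ∪ D₂)) ∪ (D₁ \ D₂) := by
    ext x
    constructor
    · rintro ⟨hxT, hx2⟩
      by_cases hx1 : x ∈ D₁
      · exact Or.inr ⟨hx1, hx2⟩
      · exact Or.inl ⟨hxT, fun h => h.elim hx1 hx2⟩
    · rintro (⟨hxT, hx⟩ | ⟨hx1, hx2⟩)
      · exact ⟨hxT, fun h => hx (Or.inr h)⟩
      · exact ⟨h₁ hx1, hx2⟩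
  have d₁ : Disjoint (T \ (D₁ ∪ D₂)) (D₂ \ D₁) :=
    disjoint_of_subset_right diff_subset (disjoint_sdiff_left.mono_right subset_union_right)
  have d₂ : Disjoint (T \ (D₁ ∪ D₂)) (D₁ \ D₂) :=
    disjoint_of_subset_right diff_subset (disjoint_sdiff_left.mono_right subset_union_left)
  rw [e₁, e₂, encard_union_eq d₁, encard_union_eq d₂, hD₂.encard_diff_comm hD₁]

/-- The union of a basis of `Z` and a basis of `M.E \ Z` is spanning. -/
lemma bases_union_spanning (hZ : Z ⊆ M.E) (hB : M.IsBasis B Z) (hB' : M.IsBasis B' (M.E \ Z)) :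
    M.Spanning (B ∪ B') := by
  rw [spanning_iff_closure_eq (union_subset hB.indep.subset_ground hB'.indep.subset_ground)]
  have h1 : M.closure (B ∪ B') = M.closure (Z ∪ (M.E \ Z)) := by
    rw [← closure_union_closure_left_eq, hB.closure_eq_closure,
      closure_union_closure_left_eq, ← closure_union_closure_right_eq,
      hB'.closure_eq_closure, closure_union_closure_right_eq]
  rw [h1, union_diff_cancel hZ, closure_ground]
/-- `del M B B'` equals the cardinality of the complement of any base inside `B ∪ B'`,
whenever `B ∪ B'` is spanning. -/
lemma del_eq_encard (hsp : M.Spanning (B ∪ B')) (hD : M.IsBase D) (hDT : D ⊆ B ∪ B') :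
    del M B B' = ((B ∪ B') \ D).encard := by
  set T := B ∪ B' with hT
  refine le_antisymm ?_ ?_
  · by_cases hfin : (T \ D).Finite
    · apply sInf_le
      refine ⟨T \ D, hfin, diff_subset, ?_, rfl⟩
      rw [diff_diff_right_self]
      exact hD.indep.subset inter_subset_right
    · rw [Set.Infinite.encard_eq (by exact hfin)]
      exact le_top
  · refine le_sInf ?_
    rintro n ⟨F, hF, hFT, hInd, rfl⟩
    obtain ⟨D₁, hD₁, hsub, hD₁T⟩ := exists_base_between hInd diff_subset hsp
    have h1 : T \ D₁ ⊆ F := fun x hx => by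
      by_contra hxF
      exact hx.2 (hsub ⟨hx.1, hxF⟩)
    calc (T \ D).encard = (T \ D₁).encard := base_diff_encard_eq hD hD₁ hDT hD₁T
      _ ≤ F.encard := encard_le_encard h1
/-- **Transfer lemma**: if `B₁, B₂` are both bases of `Z` and `S` is disjoint from `Z`,
then independence of `B₁ ∪ S` implies independence of `B₂ ∪ S`. -/
lemma indep_union_transfer (hB₁ : M.IsBasis B₁ Z) (hB₂ : M.IsBasis B₂ Z)
    (hSE : S ⊆ M.E) (hdj : Disjoint S Z) (hI : M.Indep (B₁ ∪ S)) : M.Indep (B₂ ∪ S) := by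
  have hZE : Z ⊆ M.E := hB₁.subset_ground
  set W := Z ∪ S with hW
  have hWE : W ⊆ M.E := union_subset hZE hSE
  have hBS_W : B₁ ∪ S ⊆ W := union_subset_union_left S hB₁.subset
  have hb : M.IsBasis (B₁ ∪ S) W := by
    refine hI.isBasis_of_subset_of_subset_closure hBS_W (union_subset ?_ ?_)
    · exact hB₁.subset_closure.trans (M.closure_subset_closure subset_union_left)
    · exact subset_union_right.trans (M.subset_closure _ hI.subset_ground)
  -- work in the restriction to W
  have hbase : (M ↾ W).IsBase (B₁ ∪ S) := (isBase_restrict_iff hWE).2 hb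
  have hB₂i : (M ↾ W).Indep B₂ :=
    restrict_indep_iff.2 ⟨hB₂.indep, hB₂.subset.trans subset_union_left⟩
  obtain ⟨B₅, hB₅, hB₂B₅, hB₅sub⟩ := hB₂i.exists_isBase_subset_union_isBase hbase
  have hB₅b : M.IsBasis B₅ W := (isBase_restrict_iff hWE).1 hB₅
  -- B₅ ∩ Z = B₂
  have hB₅Z : B₅ ∩ Z ⊆ B₂ := by
    have := hB₂.eq_of_subset_indep (hB₅b.indep.subset inter_subset_left)
      (subset_inter hB₂B₅ hB₂.subset) inter_subset_right
    rw [← this]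
  -- S ⊆ B₅
  have hSB₅ : S ⊆ B₅ := by
    intro x hxS
    by_contra hxB₅
    have hxW : x ∈ W := Or.inr hxS
    have hsub : B₅ ⊆ B₂ ∪ (S \ {x}) := by
      intro y hy
      rcases hB₅sub hy with hyB₂ | hyBS
      · exact Or.inl hyB₂
      · rcases hyBS with hyB₁ | hyS
        · exact Or.inl (hB₅Z ⟨hy, hB₁.subset hyB₁⟩)
        · exact Or.inr ⟨hyS, fun h => hxB₅ (h ▸ hy)⟩
    have hxcl : x ∈ M.closure (B₂ ∪ (S \ {x})) := by
      have : x ∈ M.closure B₅ := hB₅b.subset_closure hxW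
      exact M.closure_subset_closure hsub this
    have hxcl2 : x ∈ M.closure (B₁ ∪ (S \ {x})) := by
      have h1 : M.closure (B₂ ∪ (S \ {x})) ⊆ M.closure (Z ∪ (S \ {x})) :=
        M.closure_subset_closure (union_subset_union_left _ hB₂.subset)
      have h2 : M.closure (Z ∪ (S \ {x})) = M.closure (B₁ ∪ (S \ {x})) := by
        rw [← closure_union_closure_left_eq, ← hB₁.closure_eq_closure,
          closure_union_closure_left_eq]
      exact h2 ▸ h1 hxcl
    have hxBS : x ∈ B₁ ∪ S := Or.inr hxS
    have hxb1 : x ∉ B₁ := fun h => hdj.ne_of_mem hxS (hB₁.subset h) rfl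
    have heq : B₁ ∪ (S \ {x}) = (B₁ ∪ S) \ {x} := by
      rw [union_diff_distrib]
      congr 1
      rw [diff_singleton_eq_self hxb1]
    rw [heq] at hxcl2
    exact hI.notMem_closure_diff_of_mem hxBS hxcl2
  exact hB₅b.indep.subset (union_subset hB₂B₅ hSB₅)
lemma del_basis_left_le (hB₁ : M.IsBasis B₁ Z) (hB₂ : M.IsBasis B₂ Z)
    (hB' : M.IsBasis B' (M.E \ Z)) : del M B₂ B' ≤ del M B₁ B' := by
  have hZE : Z ⊆ M.E := hB₁.subset_ground
  refine le_sInf ?_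
  rintro n ⟨F, hFfin, hFT, hInd, rfl⟩
  set T₁ := B₁ ∪ B' with hT₁
  have hsp : M.Spanning T₁ := bases_union_spanning hZE hB₁ hB'
  obtain ⟨D₁, hD₁, hsub₁, hD₁T⟩ := exists_base_between hInd diff_subset hsp
  obtain ⟨D, hD, hBD, hDsub⟩ := hB₁.indep.exists_isBase_subset_union_isBase hD₁
  have hDT : D ⊆ T₁ := hDsub.trans (union_subset subset_union_left hD₁T)
  have hcard : (T₁ \ D).encard ≤ F.encard := by
    have h1 : T₁ \ D₁ ⊆ F := fun x hx => by
      by_contra hxF; exact hx.2 (hsub₁ ⟨hx.1, hxF⟩)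
    calc (T₁ \ D).encard = (T₁ \ D₁).encard := base_diff_encard_eq hD hD₁ hDT hD₁T
      _ ≤ F.encard := encard_le_encard h1
  set F' := T₁ \ D with hF'
  have hF'B' : F' ⊆ B' := by
    rintro x ⟨hxT, hxD⟩
    rcases hxT with hxB₁ | hxB'
    · exact absurd (hBD hxB₁) hxD
    · exact hxB'
  have hF'fin : F'.Finite := by
    rw [← encard_lt_top_iff]
    exact lt_of_le_of_lt hcard hFfin.encard_lt_top
  have hSD : B' \ F' ⊆ D := by
    rintro x ⟨hxB', hxF'⟩
    by_contra hxD
    exact hxF' ⟨Or.inr hxB', hxD⟩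
  have hind1 : M.Indep (B₁ ∪ (B' \ F')) := hD.indep.subset (union_subset hBD hSD)
  have hdjZ : Disjoint (B' \ F') Z := by
    refine Disjoint.mono_left (diff_subset.trans hB'.subset) ?_
    exact disjoint_sdiff_left
  have hind2 : M.Indep (B₂ ∪ (B' \ F')) :=
    indep_union_transfer hB₁ hB₂ (diff_subset.trans hB'.indep.subset_ground) hdjZ hind1
  have hdjB₂ : Disjoint B₂ F' := by
    refine Disjoint.mono hB₂.subset (hF'B'.trans hB'.subset) ?_
    exact disjoint_sdiff_right
  refine le_trans (sInf_le ⟨F', hF'fin, hF'B'.trans subset_union_right, ?_, rfl⟩) hcard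
  have : (B₂ ∪ B') \ F' = B₂ ∪ (B' \ F') := by
    rw [union_diff_distrib, hdjB₂.sdiff_eq_left]
  rw [this]
  exact hind2

lemma del_basis_left_eq (hB₁ : M.IsBasis B₁ Z) (hB₂ : M.IsBasis B₂ Z)
    (hB' : M.IsBasis B' (M.E \ Z)) : del M B₁ B' = del M B₂ B' :=
  le_antisymm (del_basis_left_le hB₂ hB₁ hB') (del_basis_left_le hB₁ hB₂ hB')

lemma del_comm (M : Matroid α) (I J : Set α) : del M I J = del M J I := by
  simp only [del, union_comm]

lemma del_basis_right_eq (hZ : Z ⊆ M.E) (hB : M.IsBasis B Z) (hB'₁ : M.IsBasis B₁ (M.E \ Z))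
    (hB'₂ : M.IsBasis B₂ (M.E \ Z)) : del M B B₁ = del M B B₂ := by
  rw [del_comm M B B₁, del_comm M B B₂]
  have hB2 : M.IsBasis B (M.E \ (M.E \ Z)) := by rwa [diff_diff_cancel_left hZ]
  exact del_basis_left_eq hB'₁ hB'₂ hB2

lemma conn_eq_del (hZ : Z ⊆ M.E) (hB : M.IsBasis B Z) (hB' : M.IsBasis B' (M.E \ Z)) :
    conn M Z = del M B B' := by
  have hBmem : (M ↾ Z).IsBase B := (isBase_restrict_iff hZ).2 hB
  have hB'mem : (M ↾ (M.E \ Z)).IsBase B' := (isBase_restrict_iff diff_subset).2 hB'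
  refine le_antisymm ?_ ?_
  · exact le_trans (iInf₂_le B hBmem) (iInf₂_le B' hB'mem)
  · refine le_iInf₂ fun B₁ h₁ => le_iInf₂ fun B'₁ h'₁ => ?_
    have hb₁ : M.IsBasis B₁ Z := (isBase_restrict_iff hZ).1 h₁
    have hb'₁ : M.IsBasis B'₁ (M.E \ Z) := (isBase_restrict_iff diff_subset).1 h'₁
    rw [del_basis_left_eq hB hb₁ hB', del_basis_right_eq hZ hb₁ hB' hb'₁]
/-- **Counting lemma**: if `U ∪ W` is independent, `W ⊆ cl(U ∪ P)` and `W` is disjoint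
from `U ∪ P`, then `|W| ≤ |P|`. -/
lemma encard_le_of_closure (hUW : M.Indep (U ∪ W)) (hP : P ⊆ M.E)
    (hWcl : W ⊆ M.closure (U ∪ P)) (hdj : Disjoint W (U ∪ P)) : W.encard ≤ P.encard := by
  set V := (U ∪ W) ∪ P with hV
  have hVE : V ⊆ M.E := union_subset hUW.subset_ground hP
  have hUP_V : U ∪ P ⊆ V := union_subset (subset_union_left.trans subset_union_left)
    subset_union_right
  obtain ⟨B₂, hB₂, hUB₂⟩ := (hUW.subset subset_union_left).subset_isBasis_of_subset
    (subset_union_left (t := P)) (union_subset (subset_union_left.trans hUW.subset_ground) hP)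
  have hB₂V : M.IsBasis B₂ V := by
    refine hB₂.indep.isBasis_of_subset_of_subset_closure (hB₂.subset.trans hUP_V) ?_
    rw [hB₂.closure_eq_closure]
    refine union_subset (union_subset ?_ ?_) ?_
    · exact subset_union_left.trans (M.subset_closure (U ∪ P)
        (union_subset (subset_union_left.trans hUW.subset_ground) hP))
    · exact hWcl
    · exact subset_union_right.trans (M.subset_closure (U ∪ P)
        (union_subset (subset_union_left.trans hUW.subset_ground) hP))
  obtain ⟨B₁, hB₁, hUWB₁⟩ := hUW.subset_isBasis_of_subset (subset_union_left (t := P)) hVE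
  -- exchange in the restriction
  have hb₁ : (M ↾ V).IsBase B₁ := (isBase_restrict_iff hVE).2 hB₁
  have hb₂ : (M ↾ V).IsBase B₂ := (isBase_restrict_iff hVE).2 hB₂V
  have hcomm := hb₁.encard_diff_comm hb₂
  have hW1 : W ⊆ B₁ \ B₂ := by
    intro x hx
    refine ⟨hUWB₁ (Or.inr hx), fun hxB₂ => ?_⟩
    exact hdj.ne_of_mem hx (hB₂.subset hxB₂) rfl
  have hW2 : B₂ \ B₁ ⊆ P := by
    rintro x ⟨hxB₂, hxB₁⟩
    rcases hB₂.subset hxB₂ with hxU | hxP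
    · exact absurd (hUWB₁ (Or.inl hxU)) hxB₁
    · exact hxP
  calc W.encard ≤ (B₁ \ B₂).encard := encard_le_encard hW1
    _ = (B₂ \ B₁).encard := hcomm
    _ ≤ P.encard := encard_le_encard hW2

/-- A basis of a subset extends within a basis of a superset to avoid the subset. -/
lemma basis_ext_subset_diff (hI : M.IsBasis I W) (hB : M.IsBasis B V) (_hWV : W ⊆ V)
    (hIB : I ⊆ B) : B \ I ⊆ V \ W := by
  rintro x ⟨hxB, hxI⟩
  refine ⟨hB.subset hxB, fun hxW => hxI ?_⟩
  exact hI.mem_of_insert_indep hxW (hB.indep.subset (insert_subset hxB hIB))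

/-- Extend a basis of `X` to a basis of `X ∪ Y` inside `B_X ∪ B_Y`. -/
lemma exists_union_basis (hBX : M.IsBasis B₁ X) (hBY : M.IsBasis B₂ Y) :
    ∃ Bu, M.IsBasis Bu (X ∪ Y) ∧ B₁ ⊆ Bu ∧ Bu ⊆ B₁ ∪ B₂ := by
  have hE : B₁ ∪ B₂ ⊆ M.E := union_subset hBX.indep.subset_ground hBY.indep.subset_ground
  obtain ⟨Bu, hBu, hB₁Bu⟩ := hBX.indep.subset_isBasis_of_subset (subset_union_left (t := B₂)) hE
  refine ⟨Bu, ?_, hB₁Bu, hBu.subset⟩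
  refine hBu.indep.isBasis_of_subset_of_subset_closure
    (hBu.subset.trans (union_subset_union hBX.subset hBY.subset)) ?_
  rw [hBu.closure_eq_closure]
  have : M.closure (B₁ ∪ B₂) = M.closure (X ∪ Y) := by
    rw [← closure_union_closure_left_eq, hBX.closure_eq_closure, closure_union_closure_left_eq,
      ← closure_union_closure_right_eq, hBY.closure_eq_closure, closure_union_closure_right_eq]
  rw [this]
  exact M.subset_closure (X ∪ Y) (union_subset hBX.subset_ground hBY.subset_ground)
lemma encard_split {A D₁ D₂ : Set α} (hAD : A ∩ D₂ ⊆ D₁) :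
    (A \ D₂).encard = (A \ D₁).encard + ((D₁ \ D₂) ∩ A).encard := by
  have heq : A \ D₂ = (A \ D₁) ∪ ((D₁ \ D₂) ∩ A) := by
    ext x
    constructor
    · rintro ⟨hxA, hxD₂⟩
      by_cases hxD₁ : x ∈ D₁
      · exact Or.inr ⟨⟨hxD₁, hxD₂⟩, hxA⟩
      · exact Or.inl ⟨hxA, hxD₁⟩
    · rintro (⟨hxA, hxD₁⟩ | ⟨⟨hxD₁, hxD₂⟩, hxA⟩)
      · exact ⟨hxA, fun hx => hxD₁ (hAD ⟨hxA, hx⟩)⟩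
      · exact ⟨hxA, hxD₂⟩
  rw [heq, encard_union_eq]
  have : Disjoint (A \ D₁) D₁ := disjoint_sdiff_left
  exact disjoint_of_subset_right (inter_subset_left.trans diff_subset) this

lemma encard_inter_split {A B D : Set α} (hsub : D ⊆ A ∪ B) (hdj : Disjoint A B) :
    D.encard = (D ∩ A).encard + (D ∩ B).encard := by
  have heq : D = (D ∩ A) ∪ (D ∩ B) := by
    rw [← inter_union_distrib_left, inter_eq_left.2 hsub]
  rw [heq, encard_union_eq]
  · rw [← heq]
  · exact hdj.mono inter_subset_right inter_subset_right

end Aux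

theorem stmt15 (M : Matroid α) (X Y : Set α) (hX : X ⊆ M.E) (hY : Y ⊆ M.E) :
    conn M (X ∪ Y) + conn M (X ∩ Y) ≤ conn M X + conn M Y := by
  have hXY : X ∪ Y ⊆ M.E := union_subset hX hY
  have hXiY : X ∩ Y ⊆ M.E := inter_subset_left.trans hX
  -- basis of the intersection, extended into X and into Y
  obtain ⟨I₁, hI₁⟩ := M.exists_isBasis (X ∩ Y) hXiY
  obtain ⟨BX, hBX, hI₁BX⟩ :=
    hI₁.indep.subset_isBasis_of_subset (hI₁.subset.trans inter_subset_left) hX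
  obtain ⟨BY, hBY, hI₁BY⟩ :=
    hI₁.indep.subset_isBasis_of_subset (hI₁.subset.trans inter_subset_right) hY
  -- basis of the co-union extended into the co-Y
  obtain ⟨I₄, hI₄⟩ := M.exists_isBasis (M.E \ (X ∪ Y)) diff_subset
  obtain ⟨BY', hBY', hI₄BY'⟩ := hI₄.indep.subset_isBasis_of_subset
    (hI₄.subset.trans (diff_subset_diff_right subset_union_right)) diff_subset
  -- basis of the union extending BX inside BX ∪ BY
  obtain ⟨Bu, hBu, hBXBu, hBusub⟩ := exists_union_basis hBX hBY
  set K₃ := Bu \ BX with hK₃def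
  -- region facts, part 1
  have hA3 : BY \ I₁ ⊆ Y \ X := by
    intro x hx
    have h := basis_ext_subset_diff hI₁ hBY inter_subset_right hI₁BY hx
    exact ⟨h.1, fun hxX => h.2 ⟨hxX, h.1⟩⟩
  have hK₃BY : K₃ ⊆ BY := fun x hx => (hBusub hx.1).elim (fun h => absurd h hx.2) id
  have hK₃A3 : K₃ ⊆ BY \ I₁ := fun x hx => ⟨hK₃BY hx, fun h => hx.2 (hI₁BX h)⟩
  have hK₃R : K₃ ⊆ Y \ X := hK₃A3.trans hA3
  have hK₃E : K₃ ⊆ M.E := fun x hx => hY (hK₃R hx).1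
  -- adapted basis J of I₄ ∪ K₃ containing I₄
  obtain ⟨Jb, hJb, hI₄J⟩ := hI₄.indep.subset_isBasis_of_subset (subset_union_left (t := K₃))
    (union_subset hI₄.indep.subset_ground hK₃E)
  have hJbsub : Jb ⊆ M.E \ X := by
    refine hJb.subset.trans (union_subset (hI₄.subset.trans
      (diff_subset_diff_right subset_union_left)) ?_)
    exact fun x hx => ⟨hK₃E hx, (hK₃R hx).2⟩
  -- the adapted basis BX' of M.E \ X
  obtain ⟨BX', hBX', hJBX'⟩ := hJb.indep.subset_isBasis_of_subset hJbsub diff_subset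
  have hI₄BX' : I₄ ⊆ BX' := hI₄J.trans hJBX'
  set L₃ := BX' \ I₄ with hL₃def
  have hL₃R : L₃ ⊆ Y \ X := by
    intro x hx
    have h := basis_ext_subset_diff hI₄ hBX' (diff_subset_diff_right subset_union_left)
      hI₄BX' hx
    have hxXY : x ∈ X ∪ Y := by
      by_contra hn
      exact h.2 ⟨h.1.1, hn⟩
    exact ⟨hxXY.elim (fun hh => absurd hh h.1.2) id, h.1.2⟩
  -- basis Bm' of M.E \ (X ∩ Y) extending BY' inside BY' ∪ BX'
  obtain ⟨Bm', hBm'0, hBY'Bm', hBm'sub⟩ := exists_union_basis hBY' hBX'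
  have hcompl : (M.E \ Y) ∪ (M.E \ X) = M.E \ (X ∩ Y) := by
    rw [← diff_inter, inter_comm]
  have hBm' : M.IsBasis Bm' (M.E \ (X ∩ Y)) := by rwa [hcompl] at hBm'0
  set K₃' := Bm' \ BY' with hK₃'def
  have hK₃'L₃ : K₃' ⊆ L₃ := fun x hx =>
    ⟨(hBm'sub hx.1).elim (fun h => absurd h hx.2) id, fun h => hx.2 (hI₄BY' h)⟩
  have hK₃'R : K₃' ⊆ Y \ X := hK₃'L₃.trans hL₃R
  -- frames are spanning
  have hspU : M.Spanning (Bu ∪ I₄) := bases_union_spanning hXY hBu hI₄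
  have hspX : M.Spanning (BX ∪ BX') := bases_union_spanning hX hBX hBX'
  have hspY : M.Spanning (BY ∪ BY') := bases_union_spanning hY hBY hBY'
  have hspI : M.Spanning (I₁ ∪ Bm') := bases_union_spanning hXiY hI₁ hBm'
  -- the four bases (plus the auxiliary DY')
  obtain ⟨Du, hDu, hBuDu, hDuT⟩ := exists_base_between hBu.indep subset_union_left hspU
  obtain ⟨DX, hDX, hsubDX, hDXT⟩ := exists_base_between
    (hDu.indep.subset (inter_subset_left (t := BX ∪ BX'))) inter_subset_right hspX
  obtain ⟨Dm, hDm, hBm'Dm, hDmT⟩ := exists_base_between hBm'.indep subset_union_right hspI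
  obtain ⟨DY, hDY, hsubDY, hDYT⟩ := exists_base_between
    (hDm.indep.subset (inter_subset_left (t := BY ∪ BY'))) inter_subset_right hspY
  obtain ⟨DY', hDY', hBYDY', hDY'T⟩ := exists_base_between hBY.indep subset_union_left hspY
  -- the four connectivity values
  have hcU : conn M (X ∪ Y) = ((Bu ∪ I₄) \ Du).encard :=
    (conn_eq_del hXY hBu hI₄).trans (del_eq_encard hspU hDu hDuT)
  have hcX : conn M X = ((BX ∪ BX') \ DX).encard :=
    (conn_eq_del hX hBX hBX').trans (del_eq_encard hspX hDX hDXT)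
  have hcI : conn M (X ∩ Y) = ((I₁ ∪ Bm') \ Dm).encard :=
    (conn_eq_del hXiY hI₁ hBm').trans (del_eq_encard hspI hDm hDmT)
  have hcY : conn M Y = ((BY ∪ BY') \ DY).encard :=
    (conn_eq_del hY hBY hBY').trans (del_eq_encard hspY hDY hDYT)
  have hcY' : conn M Y = ((BY ∪ BY') \ DY').encard :=
    (conn_eq_del hY hBY hBY').trans (del_eq_encard hspY hDY' hDY'T)
  -- trivial if one of the right-hand connectivities is infinite
  by_cases htopX : conn M X = ⊤
  · rw [htopX, top_add]; exact le_top
  by_cases htopY : conn M Y = ⊤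
  · rw [htopY, add_top]; exact le_top
  -- the key finiteness bound : |K₃ \ BX'| ≤ conn M Y  (via the adapted basis Jb)
  set t₁s := K₃ \ BX' with ht₁def
  set t₂s := K₃' \ BY with ht₂def
  have hdjYI₄ : ∀ x, x ∈ Y \ X → x ∈ I₄ → False := fun x hx h =>
    (hI₄.subset h).2 (Or.inr hx.1)
  have ht₁cY : t₁s.encard ≤ conn M Y := by
    have hsubW : t₁s ⊆ K₃ \ Jb := fun x hx => ⟨hx.1, fun h => hx.2 (hJBX' h)⟩
    have hUW : M.Indep (((I₄ ∩ DY') ∪ (Jb ∩ K₃)) ∪ (K₃ \ Jb)) := by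
      refine hDY'.indep.subset (union_subset (union_subset inter_subset_right ?_) ?_)
      · exact inter_subset_right.trans (hK₃BY.trans hBYDY')
      · exact diff_subset.trans (hK₃BY.trans hBYDY')
    have hWcl : K₃ \ Jb ⊆ M.closure (((I₄ ∩ DY') ∪ (Jb ∩ K₃)) ∪ (I₄ \ DY')) := by
      have h1 : K₃ ⊆ M.closure Jb := subset_union_right.trans hJb.subset_closure
      have h2 : Jb ⊆ ((I₄ ∩ DY') ∪ (Jb ∩ K₃)) ∪ (I₄ \ DY') := by
        intro x hx
        rcases hJb.subset hx with hxI₄ | hxK₃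
        · by_cases hxD : x ∈ DY'
          · exact Or.inl (Or.inl ⟨hxI₄, hxD⟩)
          · exact Or.inr ⟨hxI₄, hxD⟩
        · exact Or.inl (Or.inr ⟨hx, hxK₃⟩)
      exact fun x hx => M.closure_subset_closure h2 (h1 hx.1)
    have hdj : Disjoint (K₃ \ Jb) (((I₄ ∩ DY') ∪ (Jb ∩ K₃)) ∪ (I₄ \ DY')) := by
      rw [disjoint_union_right, disjoint_union_right]
      refine ⟨⟨?_, ?_⟩, ?_⟩
      · exact Set.disjoint_left.2 fun x hx h => hdjYI₄ x (hK₃R hx.1) h.1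
      · exact Set.disjoint_left.2 fun x hx h => hx.2 h.1
      · exact Set.disjoint_left.2 fun x hx h => hdjYI₄ x (hK₃R hx.1) h.1
    have hkey := encard_le_of_closure hUW (diff_subset.trans hI₄.indep.subset_ground) hWcl hdj
    calc t₁s.encard ≤ (K₃ \ Jb).encard := encard_le_encard hsubW
      _ ≤ (I₄ \ DY').encard := hkey
      _ ≤ ((BY ∪ BY') \ DY').encard :=
          encard_le_encard (diff_subset_diff_left (hI₄BY'.trans subset_union_right))
      _ = conn M Y := hcY'.symm
  -- the primal accounting identity (1)
  have hE1 : ((Bu ∪ I₄) \ Du).encard = (I₄ \ DX).encard + ((DX \ Du) ∩ I₄).encard := by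
    have h0 : (Bu ∪ I₄) \ Du = I₄ \ Du := by
      rw [union_diff_distrib, diff_eq_empty.2 hBuDu, empty_union]
    rw [h0]
    exact encard_split (fun x hx => hsubDX ⟨hx.2, Or.inr (hI₄BX' hx.1)⟩)
  have hBXDX : BX ⊆ DX := fun x hx => hsubDX ⟨hBuDu (hBXBu hx), Or.inl hx⟩
  have hE2 : ((BX ∪ BX') \ DX).encard = (I₄ \ DX).encard + (L₃ \ DX).encard := by
    have h0 : (BX ∪ BX') \ DX = BX' \ DX := by
      rw [union_diff_distrib, diff_eq_empty.2 hBXDX, empty_union]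
    have h1 : I₄ ∪ L₃ = BX' := union_diff_cancel hI₄BX'
    rw [h0, ← h1, union_diff_distrib, encard_union_eq]
    exact disjoint_sdiff_right.mono diff_subset diff_subset
  have hDXDu_sub : DX \ Du ⊆ I₄ ∪ L₃ := by
    intro x hx
    rcases hDXT hx.1 with hxBX | hxBX'
    · exact absurd (hBuDu (hBXBu hxBX)) hx.2
    · by_cases h : x ∈ I₄
      · exact Or.inl h
      · exact Or.inr ⟨hxBX', h⟩
  have hE3 : (DX \ Du).encard = ((DX \ Du) ∩ I₄).encard + ((DX \ Du) ∩ L₃).encard :=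
    encard_inter_split hDXDu_sub disjoint_sdiff_right
  have hE5 : Du \ DX = t₁s := by
    ext x
    constructor
    · rintro ⟨hxDu, hxDX⟩
      have hxnT : x ∉ BX ∪ BX' := fun h => hxDX (hsubDX ⟨hxDu, h⟩)
      rcases hDuT hxDu with hxBu | hxI₄
      · exact ⟨⟨hxBu, fun h => hxnT (Or.inl h)⟩, fun h => hxnT (Or.inr h)⟩
      · exact absurd (Or.inr (hI₄BX' hxI₄)) hxnT
    · rintro ⟨⟨hxBu, hxBX⟩, hxBX'⟩
      refine ⟨hBuDu hxBu, fun hxDX => ?_⟩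
      rcases hDXT hxDX with h | h
      · exact hxBX h
      · exact hxBX' h
  have hE4 : (DX \ Du).encard = t₁s.encard := by rw [← hE5, hDX.encard_diff_comm hDu]
  have hEq1 : conn M (X ∪ Y) + ((L₃ \ DX).encard + ((DX \ Du) ∩ L₃).encard)
      = conn M X + t₁s.encard := by
    rw [hcU, hcX, hE1, hE2, ← hE4, hE3, add_add_add_comm]
  -- the dual accounting identity (2)
  have hBY'Dm : BY' ⊆ Dm := hBY'Bm'.trans hBm'Dm
  have hBY'DY : BY' ⊆ DY := fun x hx => hsubDY ⟨hBY'Dm hx, Or.inr hx⟩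
  have hE1' : ((I₁ ∪ Bm') \ Dm).encard = (I₁ \ DY).encard + ((DY \ Dm) ∩ I₁).encard := by
    have h0 : (I₁ ∪ Bm') \ Dm = I₁ \ Dm := by
      rw [union_diff_distrib, diff_eq_empty.2 hBm'Dm, union_empty]
    rw [h0]
    exact encard_split (fun x hx => hsubDY ⟨hx.2, Or.inl (hI₁BY hx.1)⟩)
  have hE2' : ((BY ∪ BY') \ DY).encard
      = (I₁ \ DY).encard + ((BY \ I₁) \ DY).encard := by
    have h0 : (BY ∪ BY') \ DY = BY \ DY := by
      rw [union_diff_distrib, diff_eq_empty.2 hBY'DY, union_empty]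
    have h2 : BY \ DY = (I₁ \ DY) ∪ ((BY \ I₁) \ DY) := by
      rw [← union_diff_distrib, union_diff_cancel hI₁BY]
    rw [h0, h2, encard_union_eq]
    exact disjoint_sdiff_right.mono diff_subset diff_subset
  have hDYDm_sub : DY \ Dm ⊆ I₁ ∪ (BY \ I₁) := by
    intro x hx
    rcases hDYT hx.1 with hxBY | hxBY'
    · by_cases h : x ∈ I₁
      · exact Or.inl h
      · exact Or.inr ⟨hxBY, h⟩
    · exact absurd (hBY'Dm hxBY') hx.2
  have hE3' : (DY \ Dm).encard
      = ((DY \ Dm) ∩ I₁).encard + ((DY \ Dm) ∩ (BY \ I₁)).encard :=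
    encard_inter_split hDYDm_sub disjoint_sdiff_right
  have hE5' : Dm \ DY = t₂s := by
    ext x
    constructor
    · rintro ⟨hxDm, hxDY⟩
      have hxnT : x ∉ BY ∪ BY' := fun h => hxDY (hsubDY ⟨hxDm, h⟩)
      rcases hDmT hxDm with hxI₁ | hxBm'
      · exact absurd (Or.inl (hI₁BY hxI₁)) hxnT
      · exact ⟨⟨hxBm', fun h => hxnT (Or.inr h)⟩, fun h => hxnT (Or.inl h)⟩
    · rintro ⟨⟨hxBm', hxBY'⟩, hxBY⟩
      refine ⟨hBm'Dm hxBm', fun hxDY => ?_⟩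
      rcases hDYT hxDY with h | h
      · exact hxBY h
      · exact hxBY' h
  have hE4' : (DY \ Dm).encard = t₂s.encard := by rw [← hE5', hDY.encard_diff_comm hDm]
  have hEq2 : conn M (X ∩ Y) + (((BY \ I₁) \ DY).encard + ((DY \ Dm) ∩ (BY \ I₁)).encard)
      = conn M Y + t₂s.encard := by
    rw [hcI, hcY, hE1', hE2', ← hE4', hE3', add_add_add_comm]
  -- the two crossing claims
  have hC1 : t₂s ⊆ (L₃ \ DX) ∪ ((DX \ Du) ∩ L₃) := by
    intro x hx
    have hxL₃ : x ∈ L₃ := hK₃'L₃ hx.1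
    by_cases hxDX : x ∈ DX
    · refine Or.inr ⟨⟨hxDX, fun hxDu => ?_⟩, hxL₃⟩
      rcases hDuT hxDu with hxBu | hxI₄
      · rcases hBusub hxBu with hxBX | hxBY
        · exact (hL₃R hxL₃).2 (hBX.subset hxBX)
        · exact hx.2 hxBY
      · exact hxL₃.2 hxI₄
    · exact Or.inl ⟨hxL₃, hxDX⟩
  have hC2 : t₁s ⊆ ((BY \ I₁) \ DY) ∪ ((DY \ Dm) ∩ (BY \ I₁)) := by
    intro x hx
    have hxA₃ : x ∈ BY \ I₁ := hK₃A3 hx.1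
    by_cases hxDY : x ∈ DY
    · refine Or.inr ⟨⟨hxDY, fun hxDm => ?_⟩, hxA₃⟩
      rcases hDmT hxDm with hxI₁ | hxBm'
      · exact hxA₃.2 hxI₁
      · rcases hBm'sub hxBm' with hxBY' | hxBX'
        · exact (hBY'.subset hxBY').2 (hBY.subset (hK₃BY hx.1))
        · exact hx.2 hxBX'
    · exact Or.inl ⟨hxA₃, hxDY⟩
  set b : ℕ∞ := (L₃ \ DX).encard + ((DX \ Du) ∩ L₃).encard with hbdef
  set d : ℕ∞ := ((BY \ I₁) \ DY).encard + ((DY \ Dm) ∩ (BY \ I₁)).encard with hddef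
  have ht₂b : t₂s.encard ≤ b := (encard_le_encard hC1).trans (encard_union_le _ _)
  have ht₁d : t₁s.encard ≤ d := (encard_le_encard hC2).trans (encard_union_le _ _)
  -- finiteness of the correction terms
  have hbtop : b ≠ ⊤ := by
    have h1 : (L₃ \ DX).encard ≤ conn M X := by
      rw [hcX]
      exact encard_le_encard (diff_subset_diff_left (diff_subset.trans subset_union_right))
    have h2 : ((DX \ Du) ∩ L₃).encard ≤ t₁s.encard :=
      hE4 ▸ encard_le_encard inter_subset_left
    have hble : b ≤ conn M X + conn M Y := add_le_add h1 (h2.trans ht₁cY)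
    intro h
    rw [h, top_le_iff, ENat.add_eq_top] at hble
    exact hble.elim htopX htopY
  have hdtop : d ≠ ⊤ := by
    have h1 : ((BY \ I₁) \ DY).encard ≤ conn M Y := by
      rw [hcY]
      exact encard_le_encard (diff_subset_diff_left (diff_subset.trans subset_union_left))
    have h2 : ((DY \ Dm) ∩ (BY \ I₁)).encard ≤ t₂s.encard :=
      hE4' ▸ encard_le_encard inter_subset_left
    have hdle : d ≤ conn M Y + b := add_le_add h1 (h2.trans ht₂b)
    intro h
    rw [h, top_le_iff, ENat.add_eq_top] at hdle
    exact hdle.elim htopY hbtop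
  -- final arithmetic
  have hmain : (conn M (X ∪ Y) + conn M (X ∩ Y)) + (b + d)
      = (conn M X + conn M Y) + (t₁s.encard + t₂s.encard) := by
    rw [add_add_add_comm (conn M (X ∪ Y)) (conn M (X ∩ Y)) b d, hEq1, hEq2,
      add_add_add_comm]
  have hfinal : (conn M (X ∪ Y) + conn M (X ∩ Y)) + (b + d)
      ≤ (conn M X + conn M Y) + (b + d) := by
    rw [hmain]
    refine add_le_add le_rfl ?_
    rw [add_comm b d]
    exact add_le_add ht₁d ht₂b
  exact WithTop.le_of_add_le_add_right (by
    intro h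
    exact (ENat.add_eq_top.1 h).elim hbtop hdtop) hfinal
end

section
/- Let (X_i)_{i∈I} be a nested family of subsets of the ground set of a matroid M (X_i ⊆ X_j whenever i ≥ j) with κ(X_i) ≤ k for all i. Then κ(⋂_{i∈I} X_i) ≤ k. -/
open Set Matroid

variable {α : Type*}

/-! ### Auxiliary lemmas for `stmt16` -/

/-- Two bases of the same set have equicardinal complements in that set. -/
lemma aux_basis_compl_encard_eq {M : Matroid α} {J₁ J₂ S : Set α}
    (hJ₁ : M.IsBasis J₁ S) (hJ₂ : M.IsBasis J₂ S) :
    (S \ J₁).encard = (S \ J₂).encard := by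
  have hcomm : (J₁ \ J₂).encard = (J₂ \ J₁).encard :=
    Matroid.IsBase.encard_sdiff_comm
      ((Matroid.isBase_restrict_iff hJ₁.subset_ground).2 hJ₁)
      ((Matroid.isBase_restrict_iff hJ₂.subset_ground).2 hJ₂)
  have h₁ : S \ J₁ = (S \ (J₁ ∪ J₂)) ∪ (J₂ \ J₁) := by
    ext x
    constructor
    · rintro ⟨hxS, hx1⟩
      by_cases hx2 : x ∈ J₂
      · exact Or.inr ⟨hx2, hx1⟩
      · exact Or.inl ⟨hxS, by simp [hx1, hx2]⟩
    · rintro (⟨hxS, hx⟩ | ⟨hx2, hx1⟩)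
      · exact ⟨hxS, fun h ↦ hx (Or.inl h)⟩
      · exact ⟨hJ₂.subset hx2, hx1⟩
  have h₂ : S \ J₂ = (S \ (J₁ ∪ J₂)) ∪ (J₁ \ J₂) := by
    ext x
    constructor
    · rintro ⟨hxS, hx2⟩
      by_cases hx1 : x ∈ J₁
      · exact Or.inr ⟨hx1, hx2⟩
      · exact Or.inl ⟨hxS, by simp [hx1, hx2]⟩
    · rintro (⟨hxS, hx⟩ | ⟨hx1, hx2⟩)
      · exact ⟨hxS, fun h ↦ hx (Or.inr h)⟩
      · exact ⟨hJ₁.subset hx1, hx2⟩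
  have hd₁ : Disjoint (S \ (J₁ ∪ J₂)) (J₂ \ J₁) :=
    Set.disjoint_left.2 (fun x hx hx' ↦ hx.2 (Or.inr hx'.1))
  have hd₂ : Disjoint (S \ (J₁ ∪ J₂)) (J₁ \ J₂) :=
    Set.disjoint_left.2 (fun x hx hx' ↦ hx.2 (Or.inl hx'.1))
  rw [h₁, h₂, Set.encard_union_eq hd₁, Set.encard_union_eq hd₂, hcomm]

/-- `del M B C` equals the size of the complement of any basis of `B ∪ C`. -/
lemma aux_del_eq {M : Matroid α} {B C J : Set α} (hJ : M.IsBasis J (B ∪ C)) :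
    del M B C = ((B ∪ C) \ J).encard := by
  refine le_antisymm ?_ ?_
  · by_cases hfin : ((B ∪ C) \ J).Finite
    · apply sInf_le
      refine ⟨(B ∪ C) \ J, hfin, diff_subset, ?_, rfl⟩
      rw [Set.diff_diff_cancel_left hJ.subset]
      exact hJ.indep
    · simp [Set.Infinite.encard_eq hfin]
  · apply le_sInf
    rintro n ⟨F, hFfin, hFsub, hFind, rfl⟩
    obtain ⟨J', hJ', hsub⟩ := hFind.subset_isBasis_of_subset diff_subset hJ.subset_ground
    have hJ'F : (B ∪ C) \ J' ⊆ F := by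
      intro x hx
      by_contra hxF
      exact hx.2 (hsub ⟨hx.1, hxF⟩)
    calc ((B ∪ C) \ J).encard = ((B ∪ C) \ J').encard := aux_basis_compl_encard_eq hJ hJ'
      _ ≤ F.encard := Set.encard_mono hJ'F

/-- Skew transfer: if some basis `B` of `X` has `B ∪ C` independent, then `I ∪ C`
is independent for every independent `I ⊆ X`. -/
lemma aux_indep_union_transfer {M : Matroid α} {B C I X : Set α}
    (hB : M.IsBasis B X) (hBC : M.Indep (B ∪ C)) (hCX : Disjoint C X)
    (hI : M.Indep I) (hIX : I ⊆ X) : M.Indep (I ∪ C) := by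
  have hCE : C ⊆ M.E := subset_union_right.trans hBC.subset_ground
  have hICE : I ∪ C ⊆ M.E := union_subset hI.subset_ground hCE
  obtain ⟨K, hK, hIK⟩ := hI.subset_isBasis_of_subset (subset_union_left (t := C)) hICE
  have hCK : C ⊆ K := by
    intro c hc
    by_contra hcK
    have hcB : c ∉ B := fun h ↦ (Set.disjoint_left.1 hCX hc) (hB.subset h)
    have h1 : c ∈ M.closure K := hK.subset_closure (Or.inr hc)
    have h2 : K ⊆ I ∪ (C \ {c}) := by
      intro x hxK
      rcases hK.subset hxK with hx | hx
      · exact Or.inl hx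
      · exact Or.inr ⟨hx, fun h ↦ hcK (h ▸ hxK)⟩
    have h3 : c ∈ M.closure (I ∪ (C \ {c})) := M.closure_subset_closure h2 h1
    have h4 : I ⊆ M.closure B := hIX.trans hB.subset_closure
    have h5 : M.closure (I ∪ (C \ {c})) ⊆ M.closure (B ∪ (C \ {c})) := by
      have := M.closure_subset_closure
        (union_subset_union_left (C \ {c}) h4 : I ∪ (C \ {c}) ⊆ M.closure B ∪ (C \ {c}))
      rwa [M.closure_union_closure_left_eq] at this
    have h6 : B ∪ (C \ {c}) = (B ∪ C) \ {c} := by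
      ext x
      constructor
      · rintro (hx | ⟨hx, hx'⟩)
        · exact ⟨Or.inl hx, fun h ↦ hcB (h ▸ hx)⟩
        · exact ⟨Or.inr hx, hx'⟩
      · rintro ⟨(hx | hx), hx'⟩
        · exact Or.inl hx
        · exact Or.inr ⟨hx, hx'⟩
    rw [h6] at h5
    exact hBC.notMem_closure_sdiff_of_mem (Or.inr hc) (h5 h3)
  have : K = I ∪ C := hK.subset.antisymm (union_subset hIK hCK)
  exact this ▸ hK.indep

/-- `del` is monotone under exchanging the first basis. -/
lemma aux_del_le_del {M : Matroid α} {B₁ B₂ C X : Set α}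
    (hB₁ : M.IsBasis B₁ X) (hB₂ : M.IsBasis B₂ X)
    (hC : M.Indep C) (hCX : Disjoint C X) :
    del M B₂ C ≤ del M B₁ C := by
  have hB₁CE : B₁ ∪ C ⊆ M.E := union_subset hB₁.indep.subset_ground hC.subset_ground
  obtain ⟨U₁, hU₁, hBU₁⟩ := hB₁.indep.subset_isBasis_of_subset (subset_union_left (t := C)) hB₁CE
  have hU₁eq : U₁ = B₁ ∪ (C ∩ U₁) := by
    refine Set.Subset.antisymm ?_ (union_subset hBU₁ inter_subset_right)
    intro x hx
    rcases hU₁.subset hx with h | h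
    · exact Or.inl h
    · exact Or.inr ⟨h, hx⟩
  have hd₁ : del M B₁ C = (C \ U₁).encard := by
    rw [aux_del_eq hU₁]
    congr 1
    ext x
    constructor
    · rintro ⟨(hx | hx), hx'⟩
      · exact absurd (hBU₁ hx) hx'
      · exact ⟨hx, hx'⟩
    · rintro ⟨hx, hx'⟩
      exact ⟨Or.inr hx, hx'⟩
  have hind : M.Indep (B₂ ∪ (C ∩ U₁)) := by
    refine aux_indep_union_transfer hB₁ ?_ ?_ hB₂.indep hB₂.subset
    · rw [← hU₁eq]; exact hU₁.indep
    · exact Disjoint.mono_left inter_subset_left hCX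
  have hB₂CE : B₂ ∪ C ⊆ M.E := union_subset hB₂.indep.subset_ground hC.subset_ground
  obtain ⟨U₂, hU₂, hBU₂⟩ := hind.subset_isBasis_of_subset
    (union_subset_union_right B₂ inter_subset_left) hB₂CE
  have hB₂U₂ : B₂ ⊆ U₂ := subset_union_left.trans hBU₂
  have hd₂ : del M B₂ C = (C \ U₂).encard := by
    rw [aux_del_eq hU₂]
    congr 1
    ext x
    constructor
    · rintro ⟨(hx | hx), hx'⟩
      · exact absurd (hB₂U₂ hx) hx'
      · exact ⟨hx, hx'⟩
    · rintro ⟨hx, hx'⟩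
      exact ⟨Or.inr hx, hx'⟩
  rw [hd₁, hd₂]
  apply Set.encard_mono
  intro x hx
  refine ⟨hx.1, fun hxU₁ ↦ hx.2 (hBU₂ (Or.inr ⟨hx.1, hxU₁⟩))⟩

lemma aux_del_comm (M : Matroid α) (B C : Set α) : del M B C = del M C B := by
  unfold del
  rw [union_comm]

/-- The key counting lemma: if `I` is independent and `xs` is a set of more than `k`
elements of `M.closure I` outside `I`, then `(I ∪ xs) \ F` is dependent for every
`F` with at most `k` elements. -/
lemma aux_pressure {M : Matroid α} {I xs F : Set α} {k : ℕ}
    (hI : M.Indep I) (hxs : xs ⊆ M.closure I) (hdj : Disjoint xs I)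
    (hcard : (k : ℕ∞) < xs.encard) (hF : F.encard ≤ (k : ℕ∞)) :
    ¬ M.Indep ((I ∪ xs) \ F) := by
  intro hind
  have hxsE : xs ⊆ M.E := hxs.trans (M.closure_subset_ground I)
  set A := I ∪ (xs \ F) with hA
  have hIA : M.IsBasis I A := by
    refine hI.isBasis_of_subset_of_subset_closure subset_union_left ?_
    refine union_subset (M.subset_closure I hI.subset_ground) ?_
    exact (diff_subset.trans hxs)
  have hD : (I \ F) ∪ (xs \ F) ⊆ A := union_subset_union_left _ diff_subset
  have hDind : M.Indep ((I \ F) ∪ (xs \ F)) := by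
    refine hind.subset ?_
    rintro x (⟨hx, hx'⟩ | ⟨hx, hx'⟩)
    · exact ⟨Or.inl hx, hx'⟩
    · exact ⟨Or.inr hx, hx'⟩
  have hAE : A ⊆ M.E := union_subset hI.subset_ground (diff_subset.trans hxsE)
  obtain ⟨J₂, hJ₂, hDJ₂⟩ := hDind.subset_isBasis_of_subset hD hAE
  have h1 : (A \ I).encard = (A \ J₂).encard := aux_basis_compl_encard_eq hIA hJ₂
  have h2 : A \ I = xs \ F := by
    ext x
    constructor
    · rintro ⟨(hx | hx), hx'⟩
      · exact absurd hx hx'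
      · exact hx
    · intro hx
      exact ⟨Or.inr hx, fun h ↦ (Set.disjoint_left.1 hdj hx.1) h⟩
  have h3 : A \ J₂ ⊆ I ∩ F := by
    rintro x ⟨hxA, hxJ⟩
    rcases hxA with hx | hx
    · by_cases hxF : x ∈ F
      · exact ⟨hx, hxF⟩
      · exact absurd (hDJ₂ (Or.inl ⟨hx, hxF⟩)) hxJ
    · exact absurd (hDJ₂ (Or.inr hx)) hxJ
  have h4 : (xs \ F).encard ≤ (I ∩ F).encard := by
    rw [← h2, h1]
    exact Set.encard_mono h3
  have h5 : xs.encard ≤ F.encard := by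
    calc xs.encard = (xs \ F).encard + (xs ∩ F).encard :=
          (Set.encard_diff_add_encard_inter xs F).symm
      _ ≤ (I ∩ F).encard + (xs ∩ F).encard := by gcongr
      _ = ((I ∩ F) ∪ (xs ∩ F)).encard := by
          rw [Set.encard_union_eq]
          exact Disjoint.mono (inter_subset_left) (inter_subset_left) hdj.symm
      _ ≤ F.encard := Set.encard_mono (union_subset inter_subset_right inter_subset_right)
  exact absurd (h5.trans hF) (not_le.2 hcard)

/-- Extract a witness from `del M B C ≤ k`. -/
lemma aux_del_extract {M : Matroid α} {B C : Set α} {k : ℕ} (h : del M B C ≤ (k : ℕ∞)) :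
    ∃ F : Set α, F.Finite ∧ F ⊆ B ∪ C ∧ M.Indep ((B ∪ C) \ F) ∧ F.encard ≤ (k : ℕ∞) := by
  by_contra hcon
  push_neg at hcon
  have hlb : (k : ℕ∞) + 1 ≤ del M B C := by
    apply le_sInf
    rintro n ⟨F, hFfin, hFsub, hFind, rfl⟩
    exact (ENat.add_one_le_iff (by simp)).2 (hcon F hFfin hFsub hFind)
  have : (k : ℕ∞) < (k : ℕ∞) := lt_of_lt_of_le
    ((ENat.add_one_le_iff (by simp)).1 le_rfl) (hlb.trans h)
  exact lt_irrefl _ this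

/-- Extract bases from `conn M X ≤ k`. -/
lemma aux_conn_extract {M : Matroid α} {X : Set α} {k : ℕ} (h : conn M X ≤ (k : ℕ∞)) :
    ∃ B C : Set α, (M ↾ X).IsBase B ∧ (M ↾ (M.E \ X)).IsBase C ∧ del M B C ≤ (k : ℕ∞) := by
  by_contra hcon
  push_neg at hcon
  have hlb : (k : ℕ∞) + 1 ≤ conn M X := by
    refine le_iInf₂ fun B hB ↦ le_iInf₂ fun C hC ↦ ?_
    exact (ENat.add_one_le_iff (by simp)).2 (hcon B C hB hC)
  have : (k : ℕ∞) < (k : ℕ∞) := lt_of_lt_of_le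
    ((ENat.add_one_le_iff (by simp)).1 le_rfl) (hlb.trans h)
  exact lt_irrefl _ this

lemma aux_conn_le {M : Matroid α} {X B C : Set α}
    (hB : (M ↾ X).IsBase B) (hC : (M ↾ (M.E \ X)).IsBase C) :
    conn M X ≤ del M B C := by
  calc conn M X ≤ ⨅ C' ∈ {C' | (M ↾ (M.E \ X)).IsBase C'}, del M B C' := iInf₂_le B hB
    _ ≤ del M B C := iInf₂_le C hC

/-- From a finite set each of whose elements avoids some member of a nested family,
get a single member avoided by all of them. -/
lemma aux_chain_bound {i : Type*} [Nonempty i] (X : i → Set α)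
    (hnested : ∀ j l, X j ⊆ X l ∨ X l ⊆ X j) {s : Set α} (hfin : s.Finite)
    (hs : ∀ x ∈ s, ∃ j, x ∉ X j) : ∃ j, ∀ x ∈ s, x ∉ X j := by
  refine Set.Finite.induction_on
    (motive := fun s _ ↦ (∀ x ∈ s, ∃ j, x ∉ X j) → ∃ j, ∀ x ∈ s, x ∉ X j) s hfin
    (fun _ ↦ ⟨Classical.arbitrary i, by simp⟩) ?_ hs
  intro a s ha hsfin IH hs'
  obtain ⟨j₁, hj₁⟩ := IH (fun x hx ↦ hs' x (Set.mem_insert_of_mem a hx))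
  obtain ⟨j₂, hj₂⟩ := hs' a (Set.mem_insert a s)
  rcases hnested j₁ j₂ with hss | hss
  · refine ⟨j₁, fun x hx ↦ ?_⟩
    rcases Set.mem_insert_iff.1 hx with rfl | hx
    · exact fun h ↦ hj₂ (hss h)
    · exact hj₁ x hx
  · refine ⟨j₂, fun x hx ↦ ?_⟩
    rcases Set.mem_insert_iff.1 hx with rfl | hx
    · exact hj₂
    · exact fun h ↦ hj₁ x hx (hss h)

theorem stmt16 (M : Matroid α) {i : Type*} [Nonempty i] (X : i → Set α)
    (hE : ∀ j, X j ⊆ M.E) (hnested : ∀ j l, X j ⊆ X l ∨ X l ⊆ X j)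
    (k : ℕ) (hk : ∀ j, conn M (X j) ≤ (k : ℕ∞)) :
    conn M (⋂ j, X j) ≤ (k : ℕ∞) := by
  set Y := ⋂ j, X j with hY
  have hYE : Y ⊆ M.E := (Set.iInter_subset X (Classical.arbitrary i)).trans (hE _)
  set Z := M.E \ Y with hZ
  have hZE : Z ⊆ M.E := diff_subset
  -- basis B of Y
  obtain ⟨B, hB⟩ := M.exists_isBasis Y hYE
  have hBY : B ⊆ Y := hB.subset
  -- maximal extension of B inside B ∪ Z
  have hBZE : B ∪ Z ⊆ M.E := union_subset hB.indep.subset_ground hZE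
  obtain ⟨J, hJ, hBJ⟩ := hB.indep.subset_isBasis_of_subset (subset_union_left (t := Z)) hBZE
  set C₀ := J \ B with hC₀
  have hJeq : J = B ∪ C₀ := by
    rw [hC₀, Set.union_diff_cancel hBJ]
  have hC₀Z : C₀ ⊆ Z := by
    rintro x ⟨hxJ, hxB⟩
    rcases hJ.subset hxJ with h | h
    · exact absurd h hxB
    · exact h
  have hBC₀ : M.Indep (B ∪ C₀) := hJeq ▸ hJ.indep
  -- extend C₀ to a basis C of Z
  obtain ⟨C, hC, hC₀C⟩ := (hBC₀.subset subset_union_right).subset_isBasis_of_subset hC₀Z hZE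
  have hCZ : C ⊆ Z := hC.subset
  have hZYdisj : Disjoint Z Y := disjoint_sdiff_left
  have hclZ : B ∪ Z ⊆ M.closure (B ∪ C₀) := by
    rw [← hJeq]; exact hJ.subset_closure
  by_cases hcard : (C \ C₀).encard ≤ (k : ℕ∞)
  · -- Case 1: remove `C \ C₀` directly
    have hfin : (C \ C₀).Finite := by
      rw [← Set.encard_lt_top_iff]
      exact lt_of_le_of_lt hcard (by simp)
    have hBCdisj : Disjoint B (C \ C₀) :=
      Set.disjoint_left.2 fun x hxB hxC ↦
        (Set.disjoint_left.1 hZYdisj (hCZ hxC.1)) (hBY hxB)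
    have hrem : (B ∪ C) \ (C \ C₀) = B ∪ C₀ := by
      ext x
      constructor
      · rintro ⟨(hx | hx), hx'⟩
        · exact Or.inl hx
        · by_cases hx0 : x ∈ C₀
          · exact Or.inr hx0
          · exact absurd ⟨hx, hx0⟩ hx'
      · rintro (hx | hx)
        · exact ⟨Or.inl hx, fun h ↦ Set.disjoint_left.1 hBCdisj hx h⟩
        · exact ⟨Or.inr (hC₀C hx), fun h ↦ h.2 hx⟩
    have hdel : del M B C ≤ (k : ℕ∞) := by
      refine le_trans (sInf_le ?_) hcard
      exact ⟨C \ C₀, hfin, diff_subset.trans subset_union_right, hrem ▸ hBC₀, rfl⟩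
    refine le_trans (aux_conn_le ?_ ?_) hdel
    · exact (Matroid.isBase_restrict_iff hYE).2 hB
    · exact (Matroid.isBase_restrict_iff hZE).2 hC
  · -- Case 2: contradiction with some `X j`
    exfalso
    have hcard' : (k : ℕ∞) + 1 ≤ (C \ C₀).encard :=
      (ENat.add_one_le_iff (by simp)).2 (not_le.1 hcard)
    obtain ⟨xs, hxsC₁, hxscard⟩ := Set.exists_subset_encard_eq hcard'
    have hxsfin : xs.Finite := by
      rw [← Set.encard_lt_top_iff, hxscard, lt_top_iff_ne_top]
      have h11 : ((k : ℕ∞) + 1) = ((k + 1 : ℕ) : ℕ∞) := by push_cast; ring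
      rw [h11]
      exact ENat.coe_ne_top _
    have hxsC : xs ⊆ C := hxsC₁.trans diff_subset
    have hxsZ : xs ⊆ Z := hxsC.trans hCZ
    -- find a common stage j*
    obtain ⟨j₀, hj₀⟩ := aux_chain_bound X hnested hxsfin
      (fun x hx ↦ by
        have : x ∉ Y := Set.disjoint_left.1 hZYdisj (hxsZ hx)
        rw [hY, Set.mem_iInter] at this
        push_neg at this
        exact this)
    have hxsE : xs ⊆ M.E := hxsZ.trans hZE
    have hxsZj : xs ⊆ M.E \ X j₀ := fun x hx ↦ ⟨hxsE hx, hj₀ x hx⟩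
    -- stage bases
    have hYXj : Y ⊆ X j₀ := Set.iInter_subset X j₀
    set P₀ := (B ∪ C₀) ∩ X j₀ with hP₀
    obtain ⟨Bj, hBj, hP₀Bj⟩ := (hBC₀.subset inter_subset_left).subset_isBasis_of_subset
      (inter_subset_right) (hE j₀)
    set Q₀ := ((B ∪ C₀) \ X j₀) ∪ xs with hQ₀
    have hQ₀C : Q₀ ⊆ C := by
      rintro x (⟨hx, hx'⟩ | hx)
      · rcases hx with hx | hx
        · exact absurd (hYXj (hBY hx)) hx'
        · exact hC₀C hx
      · exact hxsC hx
    have hQ₀sub : Q₀ ⊆ M.E \ X j₀ := by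
      rintro x (⟨hx, hx'⟩ | hx)
      · refine ⟨?_, hx'⟩
        rcases hx with hx | hx
        · exact hYE (hBY hx)
        · exact hZE (hC₀Z hx)
      · exact hxsZj hx
    obtain ⟨Cj, hCj, hQ₀Cj⟩ := (hC.indep.subset hQ₀C).subset_isBasis_of_subset hQ₀sub
      (diff_subset)
    -- use the hypothesis at stage j₀
    obtain ⟨B', C', hB', hC', hdel'⟩ := aux_conn_extract (hk j₀)
    have hB'b : M.IsBasis B' (X j₀) := (Matroid.isBase_restrict_iff (hE j₀)).1 hB'
    have hC'b : M.IsBasis C' (M.E \ X j₀) := (Matroid.isBase_restrict_iff diff_subset).1 hC'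
    -- transfer to our bases
    have hCjdisj : Disjoint Cj (X j₀) :=
      Set.disjoint_left.2 fun x hx ↦ (hCj.subset hx).2
    have hB'disj : Disjoint B' (M.E \ X j₀) :=
      Set.disjoint_left.2 fun x hx h ↦ h.2 (hB'b.subset hx)
    have step1 : del M Bj Cj ≤ del M B' Cj :=
      aux_del_le_del hB'b hBj hCj.indep hCjdisj
    have step2 : del M B' Cj ≤ del M B' C' := by
      rw [aux_del_comm M B' Cj, aux_del_comm M B' C']
      exact aux_del_le_del hC'b hCj hB'b.indep hB'disj
    have hdelj : del M Bj Cj ≤ (k : ℕ∞) := le_trans (le_trans step1 step2) hdel'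
    obtain ⟨F, hFfin, hFsub, hFind, hFcard⟩ := aux_del_extract hdelj
    -- the pressure configuration
    have hxscl : xs ⊆ M.closure (B ∪ C₀) := fun x hx ↦
      hclZ (Or.inr (hxsZ hx))
    have hdjxs : Disjoint xs (B ∪ C₀) := by
      refine Set.disjoint_left.2 fun x hx ↦ ?_
      rintro (h | h)
      · exact Set.disjoint_left.1 hZYdisj (hxsZ hx) (hBY h)
      · exact (hxsC₁ hx).2 h
    have hWsub : (B ∪ C₀) ∪ xs ⊆ Bj ∪ Cj := by
      rintro x (hx | hx)
      · by_cases hxj : x ∈ X j₀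
        · exact Or.inl (hP₀Bj ⟨hx, hxj⟩)
        · exact Or.inr (hQ₀Cj (Or.inl ⟨hx, hxj⟩))
      · exact Or.inr (hQ₀Cj (Or.inr hx))
    have hWind : M.Indep (((B ∪ C₀) ∪ xs) \ F) :=
      hFind.subset (diff_subset_diff_left hWsub)
    refine aux_pressure hBC₀ hxscl hdjxs ?_ hFcard hWind
    rw [hxscard]
    exact lt_of_le_of_lt le_rfl ((ENat.add_one_le_iff (by simp)).1 le_rfl)
end
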